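/- Let F be a finite field with q elements and let n ≥ 1. The number of complete flags in F^n — that is, the number of chains of F-subspaces 0 = W₀ < W₁ < W₂ < ⋯ < W_n = F^n (equivalently, strictly increasing maps from {0, 1, …, n} to subspaces of F^n with W₀ the zero subspace and W_n the whole space) — equals ∏_{k=1}^{n} (1 + q + q² + ⋯ + q^{k−1}) = ∏_{k=1}^{n} (q^k − 1)/(q − 1). -/

import Mathlib

open Module Submodule Finset

section Aux

lemma geom_aux (q : ℕ) (hq : 1 ≤ q) (d : ℕ) :
    (∑ i ∈ Finset.range d, q ^ i) * (q - 1) = q ^ d - 1 := by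
  induction d with
  | zero => simp
  | succ d ih =>
    rw [Finset.sum_range_succ, add_mul, ih]
    have h1 : 1 ≤ q ^ d := Nat.one_le_pow _ _ hq
    have h2 : q ^ d ≤ q ^ (d + 1) := Nat.pow_le_pow_right hq (by omega)
    have h3 : q ^ (d + 1) = q ^ d * q := by ring
    have h4 : q ^ d * (q - 1) = q ^ (d + 1) - q ^ d := by
      rw [Nat.mul_sub, mul_one, ← pow_succ]
    omega

lemma fin_strictMono_fix {N : ℕ} {f : Fin (N + 1) → ℕ} (hf : StrictMono f)
    (h0 : f 0 = 0) (hl : f (Fin.last N) = N) (i : Fin (N + 1)) : f i = i.val := by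
  have h1 : ∀ j : Fin (N + 1), j.val ≤ f j := by
    intro j
    induction j using Fin.induction with
    | zero => simp [h0]
    | succ k ih =>
      have := hf (Fin.castSucc_lt_succ (i := k))
      simp only [Fin.coe_castSucc] at ih
      simp only [Fin.val_succ]
      omega
  have h2 : ∀ j : Fin (N + 1), f j + (N - j.val) ≤ f (Fin.last N) := by
    intro j
    induction j using Fin.reverseInduction with
    | last => simp
    | cast k ih =>
      have := hf (Fin.castSucc_lt_succ (i := k))
      simp only [Fin.val_succ] at ih
      simp only [Fin.coe_castSucc]
      have hk := k.isLt
      omega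
  have := h1 i
  have := h2 i
  have := i.isLt
  rw [hl] at *
  omega

end Aux

lemma nat_card_ne_zero (M : Type*) [Zero M] [Finite M] :
    Nat.card {x : M // x ≠ 0} + 1 = Nat.card M := by
  classical
  have : Fintype M := Fintype.ofFinite M
  have e := Nat.card_congr (Equiv.sumCompl (fun x : M => x = 0))
  rw [Nat.card_sum] at e
  have h1 : Nat.card {x : M // x = 0} = 1 := by
    have : Unique {x : M // x = 0} := ⟨⟨⟨0, rfl⟩⟩, fun x => Subtype.ext x.2⟩
    exact Nat.card_unique
  have h3 : Nat.card {x : M // x ≠ 0} = Nat.card {x : M // ¬ (x = 0)} := rfl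
  omega

lemma nat_card_sigma {ι : Type*} [Fintype ι] (g : ι → Type*) [∀ i, Finite (g i)] :
    Nat.card (Σ i, g i) = ∑ i : ι, Nat.card (g i) := by
  classical
  have : ∀ i, Fintype (g i) := fun i => Fintype.ofFinite _
  rw [Nat.card_eq_fintype_card, Fintype.card_sigma]
  exact Finset.sum_congr rfl fun i _ => Nat.card_eq_fintype_card.symm

lemma nat_card_fiber_sum {α β : Type*} [Finite α] [Fintype β] (f : α → β) :
    Nat.card α = ∑ b : β, Nat.card {a : α // f a = b} := by
  classical
  rw [← nat_card_sigma]
  exact Nat.card_congr (Equiv.sigmaFiberEquiv f).symm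
open Module Submodule Finset in
lemma card_lines (F : Type*) [Field F] [Fintype F] (V : Type*) [AddCommGroup V] [Module F V]
    [Module.Finite F V] :
    Nat.card {L : Submodule F V // Module.finrank F L = 1}
      = ∑ i ∈ Finset.range (Module.finrank F V), Fintype.card F ^ i := by
  classical
  set q := Fintype.card F with hq
  have hq2 : 2 ≤ q := Fintype.one_lt_card
  have : Finite V := Module.finite_of_finite F
  have : Fintype V := Fintype.ofFinite V
  have hfinSub : Finite (Submodule F V) :=
    Finite.of_injective (fun L => (L : Set V)) SetLike.coe_injective
  let A := {v : V // v ≠ 0}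
  let Lines := {L : Submodule F V // Module.finrank F L = 1}
  have : Fintype Lines := Fintype.ofFinite Lines
  let f : A → Lines := fun v => ⟨Submodule.span F {v.1}, finrank_span_singleton v.2⟩
  have fiber_equiv : ∀ L : Lines, {v : A // f v = L} ≃ {x : L.1 // x ≠ 0} := by
    intro L
    refine ⟨fun v => ⟨⟨v.1.1, ?_⟩, ?_⟩, fun x => ⟨⟨x.1.1, ?_⟩, ?_⟩, ?_, ?_⟩
    · have h1 : v.1.1 ∈ Submodule.span F {v.1.1} := Submodule.mem_span_singleton_self _
      have h2 : Submodule.span F {v.1.1} = L.1 := congrArg Subtype.val v.2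
      rwa [h2] at h1
    · intro h
      exact v.1.2 (by simpa using congrArg Subtype.val h)
    · intro h
      exact x.2 (Subtype.ext h)
    · refine Subtype.ext ?_
      show Submodule.span F {x.1.1} = L.1
      refine Submodule.eq_of_le_of_finrank_eq ?_ ?_
      · rw [Submodule.span_le, Set.singleton_subset_iff]; exact x.1.2
      · rw [L.2]
        exact finrank_span_singleton (fun h => x.2 (Subtype.ext h))
    · intro v; rfl
    · intro x; rfl
  have fiber_card : ∀ L : Lines, Nat.card {v : A // f v = L} = q - 1 := by
    intro L
    rw [Nat.card_congr (fiber_equiv L)]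
    have : Fintype L.1 := Fintype.ofFinite L.1
    have hcard : Nat.card L.1 = q := by
      rw [Nat.card_eq_fintype_card, card_eq_pow_finrank (K := F) (V := L.1), L.2, pow_one]
    have := nat_card_ne_zero L.1
    omega
  have htot := nat_card_fiber_sum f
  rw [Finset.sum_congr rfl (fun L _ => fiber_card L), Finset.sum_const, smul_eq_mul] at htot
  have hcardA : Nat.card A + 1 = q ^ Module.finrank F V := by
    have := nat_card_ne_zero V
    rwa [Nat.card_eq_fintype_card (α := V), card_eq_pow_finrank (K := F) (V := V)] at this
  have hgeom := geom_aux q (by omega) (Module.finrank F V)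
  have hpos : 0 < q - 1 := by omega
  have hLines : Nat.card Lines = (Finset.univ : Finset Lines).card :=
    Nat.card_eq_fintype_card
  refine Nat.eq_of_mul_eq_mul_right hpos ?_
  rw [hgeom, hLines, ← htot]
  omega
open Module Submodule Finset in
lemma card_flags (F : Type*) [Field F] [Fintype F] (m : ℕ) :
    ∀ (V : Type u) [AddCommGroup V] [Module F V] [Module.Finite F V],
      Module.finrank F V = m →
      Nat.card {W : Fin (m + 1) → Submodule F V //
          StrictMono W ∧ W 0 = ⊥ ∧ W (Fin.last m) = ⊤}
        = ∏ k ∈ Finset.range m, ∑ i ∈ Finset.range (k + 1), Fintype.card F ^ i := by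
  induction m with
  | zero =>
    intro V _ _ _ hV
    have hsub : Subsingleton V := by
      rwa [Module.finrank_zero_iff] at hV
    have hbot : ∀ W : Submodule F V, W = ⊥ := fun W => Submodule.eq_bot_of_subsingleton
    have : Unique {W : Fin 1 → Submodule F V //
        StrictMono W ∧ W 0 = ⊥ ∧ W (Fin.last 0) = ⊤} := by
      refine ⟨⟨⟨fun _ => ⊥, ?_, rfl, ?_⟩⟩, ?_⟩
      · intro a b hab
        exact absurd (Subsingleton.elim a b) hab.ne
      · rw [hbot ⊤]
      · intro W
        refine Subtype.ext (funext fun i => ?_)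
        rw [hbot (W.1 i)]
        rfl
    rw [Nat.card_unique]
    simp
  | succ m ih =>
    intro V _ _ _ hV
    classical
    have hfinV : Finite V := Module.finite_of_finite F
    have hfinSub : Finite (Submodule F V) :=
      Finite.of_injective (fun L => (L : Set V)) SetLike.coe_injective
    set q := Fintype.card F with hqdef
    let Lines := {L : Submodule F V // Module.finrank F L = 1}
    have : Fintype Lines := Fintype.ofFinite Lines
    let Flag := {W : Fin (m + 2) → Submodule F V //
        StrictMono W ∧ W 0 = ⊥ ∧ W (Fin.last (m + 1)) = ⊤}
    have hrank : ∀ (Wf : Flag) (i : Fin (m + 2)), Module.finrank F (Wf.1 i) = i.val := by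
      intro Wf i
      refine fin_strictMono_fix (f := fun j => Module.finrank F (Wf.1 j)) ?_ ?_ ?_ i
      · intro a b hab
        exact Submodule.finrank_lt_finrank_of_lt (Wf.2.1 hab)
      · show Module.finrank F (Wf.1 0) = 0
        rw [Wf.2.2.1]
        exact finrank_bot F V
      · show Module.finrank F (Wf.1 (Fin.last (m + 1))) = m + 1
        rw [Wf.2.2.2, finrank_top, hV]
    let f : Flag → Lines := fun Wf => ⟨Wf.1 1, by simpa using hrank Wf 1⟩
    have hsymm_eq : ∀ (L : Submodule F V) (p : {p' : Submodule F V // L ≤ p'})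
        (U : Submodule F (V ⧸ L)), p.1 = Submodule.comap L.mkQ U →
        (Submodule.comapMkQRelIso L).symm p = U := by
      intro L p U hp
      exact (Submodule.comapMkQRelIso L).symm_apply_eq.mpr (Subtype.ext hp)
    have fiber_equiv : ∀ L : Lines, {Wf : Flag // f Wf = L} ≃
        {U : Fin (m + 1) → Submodule F (V ⧸ L.1) //
          StrictMono U ∧ U 0 = ⊥ ∧ U (Fin.last m) = ⊤} := by
      intro L
      set o := Submodule.comapMkQRelIso L.1 with ho
      have hLbot : L.1 ≠ ⊥ := by
        intro h
        have h2 := L.2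
        rw [h, finrank_bot] at h2
        omega
      have hle : ∀ (Wf : {Wf : Flag // f Wf = L}) (j : Fin (m + 1)),
          L.1 ≤ Wf.1.1 j.succ := by
        intro Wf j
        have h1 : Wf.1.1 1 = L.1 := congrArg Subtype.val Wf.2
        rw [← h1]
        refine Wf.1.2.1.monotone ?_
        rw [Fin.le_def]
        simp [Fin.val_one]
      refine ⟨fun Wf => ⟨fun j => o.symm ⟨Wf.1.1 j.succ, hle Wf j⟩, ?_, ?_, ?_⟩,
        fun U => ⟨⟨Fin.cases ⊥ (fun j => (o (U.1 j)).1), ?_, ?_, ?_⟩, ?_⟩, ?_, ?_⟩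
      -- forward: StrictMono
      · intro a b hab
        exact o.symm.strictMono (Subtype.mk_lt_mk.mpr (Wf.1.2.1 (Fin.succ_lt_succ_iff.mpr hab)))
      -- forward: U 0 = ⊥
      · refine hsymm_eq L.1 _ ⊥ ?_
        rw [Submodule.comap_bot, Submodule.ker_mkQ]
        show Wf.1.1 (Fin.succ 0) = L.1
        rw [Fin.succ_zero_eq_one]
        exact congrArg Subtype.val Wf.2
      -- forward: U last = ⊤
      · refine hsymm_eq L.1 _ ⊤ ?_
        rw [Submodule.comap_top]
        show Wf.1.1 (Fin.succ (Fin.last m)) = ⊤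
        rw [Fin.succ_last]
        exact Wf.1.2.2.2
      -- backward: StrictMono
      · rw [Fin.strictMono_iff_lt_succ]
        intro i
        induction i using Fin.cases with
        | zero =>
          rw [Fin.castSucc_zero]
          simp only [Fin.cases_zero, Fin.cases_succ]
          rw [U.2.2.1]
          have hval : ((o ⊥ : {p' // L.1 ≤ p'}) : Submodule F V) = L.1 := by
            show Submodule.comap L.1.mkQ ⊥ = L.1
            rw [Submodule.comap_bot, Submodule.ker_mkQ]
          rw [hval]
          exact hLbot.bot_lt
        | succ j =>
          rw [← Fin.succ_castSucc]
          simp only [Fin.cases_succ]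
          exact Subtype.coe_lt_coe.mpr (o.strictMono (U.2.1 (Fin.castSucc_lt_succ (i := j))))
      -- backward: W 0 = ⊥
      · exact Fin.cases_zero ..
      -- backward: W last = ⊤
      · show (Fin.cases ⊥ (fun j => (o (U.1 j)).1) : Fin (m + 2) → Submodule F V)
            ((Fin.last m).succ) = ⊤
        simp only [Fin.cases_succ]
        rw [U.2.2.2]
        show Submodule.comap L.1.mkQ ⊤ = ⊤
        rw [Submodule.comap_top]
      -- backward: fiber condition
      · refine Subtype.ext ?_
        show (Fin.cases ⊥ (fun j => (o (U.1 j)).1) : Fin (m + 2) → Submodule F V) 1 = L.1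
        rw [← Fin.succ_zero_eq_one]
        simp only [Fin.cases_succ]
        rw [U.2.2.1]
        show Submodule.comap L.1.mkQ ⊥ = L.1
        rw [Submodule.comap_bot, Submodule.ker_mkQ]
      -- left inverse
      · intro Wf
        refine Subtype.ext (Subtype.ext (funext fun i => ?_))
        induction i using Fin.cases with
        | zero =>
          simp only [Fin.cases_zero]
          exact Wf.1.2.2.1.symm
        | succ j =>
          simp only [Fin.cases_succ]
          have : (⟨Wf.1.1 j.succ, hle Wf j⟩ : {p' // L.1 ≤ p'})
              = o (o.symm ⟨Wf.1.1 j.succ, hle Wf j⟩) := (o.apply_symm_apply _).symm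
          exact (congrArg Subtype.val this).symm
      -- right inverse
      · intro U
        refine Subtype.ext (funext fun j => ?_)
        refine hsymm_eq L.1 _ (U.1 j) ?_
        show (Fin.cases ⊥ (fun j => (o (U.1 j)).1) : Fin (m + 2) → Submodule F V) j.succ
            = Submodule.comap L.1.mkQ (U.1 j)
        simp only [Fin.cases_succ]
        rfl
    have hquot : ∀ L : Lines,
        Nat.card {U : Fin (m + 1) → Submodule F (V ⧸ L.1) //
          StrictMono U ∧ U 0 = ⊥ ∧ U (Fin.last m) = ⊤}
          = ∏ k ∈ Finset.range m, ∑ i ∈ Finset.range (k + 1), q ^ i := by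
      intro L
      have hfd : Module.Finite F (V ⧸ L.1) :=
        Module.Finite.of_surjective L.1.mkQ (Submodule.mkQ_surjective L.1)
      refine ih (V ⧸ L.1) ?_
      have h1 := Submodule.finrank_quotient_add_finrank L.1
      rw [hV, L.2] at h1
      omega
    have htot : Nat.card Flag = ∑ L : Lines, Nat.card {Wf : Flag // f Wf = L} :=
      nat_card_fiber_sum f
    show Nat.card Flag = ∏ k ∈ Finset.range (m + 1), ∑ i ∈ Finset.range (k + 1), q ^ i
    rw [htot,
      Finset.sum_congr rfl
        (fun L _ => (Nat.card_congr (fiber_equiv L)).trans (hquot L)),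
      Finset.sum_const, smul_eq_mul]
    have hlines := card_lines F V
    rw [hV] at hlines
    rw [show (Finset.univ : Finset Lines).card = Nat.card Lines from
      Nat.card_eq_fintype_card.symm, hlines, Finset.prod_range_succ, mul_comm]

/-- The number of complete flags `0 = W₀ < W₁ < ⋯ < W_n = F^n` in `F^n`, for a
finite field `F` with `q` elements, equals
`∏_{k=1}^{n} (1 + q + ⋯ + q^{k-1}) = ∏_{k=1}^{n} (q^k - 1)/(q - 1)`. -/
theorem card_complete_flags_finite_field (F : Type*) [Field F] [Fintype F]
    (q : ℕ) (hq : Fintype.card F = q) (n : ℕ) (hn : 1 ≤ n) :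
    Nat.card {W : Fin (n + 1) → Submodule F (Fin n → F) //
        StrictMono W ∧ W 0 = ⊥ ∧ W (Fin.last n) = ⊤}
      = ∏ k ∈ Finset.range n, ∑ i ∈ Finset.range (k + 1), q ^ i ∧
    Nat.card {W : Fin (n + 1) → Submodule F (Fin n → F) //
        StrictMono W ∧ W 0 = ⊥ ∧ W (Fin.last n) = ⊤}
      = ∏ k ∈ Finset.range n, (q ^ (k + 1) - 1) / (q - 1) := by
  have hq2 : 2 ≤ q := hq ▸ Fintype.one_lt_card
  have hrank : Module.finrank F (Fin n → F) = n := by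
    rw [Module.finrank_pi, Fintype.card_fin]
  have h1 := card_flags F n (Fin n → F) hrank
  rw [hq] at h1
  refine ⟨h1, ?_⟩
  rw [h1]
  refine Finset.prod_congr rfl ?_
  intro k _
  have hg := geom_aux q (Nat.one_le_of_lt hq2) (k + 1)
  exact (Nat.div_eq_of_eq_mul_left (Nat.sub_pos_of_lt hq2) hg.symm).symm
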